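/- Assume all parameters α_H, α_L, ρ_H, ρ_L, μ, x, y, δ_A, δ_C, v_b, β_A, β_C, λ_H, λ_L are nonnegative, π ∈ [0,1], and r_b > 0. Let u_P, u_T : [t₀, T] → ℝ be continuous controls with u_P(t) ≥ 0 and u_T(t) ≥ 0 for all t, and let X : [t₀, T] → ℝ^9 be a differentiable function satisfying the HIV model system X'(t) = F(X(t), u_P(t), u_T(t)) for all t ∈ [t₀, T], such that along the solution N_H(X(t)) > 0, N_L(X(t)) > 0, θ(X(t)) > 0 and r_b N_H(X(t)) + N_L(X(t)) > 0 for all t ∈ [t₀, T]. If all components of X(t₀) are nonnegative, then all components of X(t) are nonnegative for every t ∈ [t₀, T]. -/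

import Mathlib

section AuxHIV

private lemma hasDerivAt_minsq (x : ℝ) :
    HasDerivAt (fun y : ℝ => (min y 0)^2) (2 * min x 0) x := by
  rcases lt_trichotomy x 0 with hx | hx | hx
  · have h1 : HasDerivAt (fun y : ℝ => y^2) (2 * x) x := by
      simpa using hasDerivAt_pow 2 x
    have h2 : (fun y : ℝ => (min y 0)^2) =ᶠ[nhds x] (fun y : ℝ => y^2) := by
      filter_upwards [Iio_mem_nhds hx] with y hy
      rw [min_eq_left (le_of_lt hy)]
    rw [min_eq_left hx.le]
    exact h1.congr_of_eventuallyEq h2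
  · subst hx
    rw [hasDerivAt_iff_tendsto_slope]
    have h : ∀ y ∈ ({(0:ℝ)}ᶜ : Set ℝ), min y 0 = slope (fun y : ℝ => (min y 0)^2) 0 y := by
      intro y hy
      have hy0 : y ≠ 0 := hy
      rcases le_total y 0 with h | h
      · rw [slope_def_field]; rw [min_eq_left h]; field_simp; simp; ring
      · rw [slope_def_field]; rw [min_eq_right h]; simp
    have hT : Filter.Tendsto (fun y : ℝ => min y 0) (nhdsWithin 0 {(0:ℝ)}ᶜ)
        (nhds (2 * min 0 0)) := by
      simp only [min_self, mul_zero]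
      have := ((continuous_id.min (continuous_const : Continuous fun _ : ℝ => (0:ℝ))).tendsto
        (0:ℝ))
      simpa using this.mono_left nhdsWithin_le_nhds
    exact hT.congr' (Filter.eventuallyEq_of_mem self_mem_nhdsWithin h)
  · have h2 : (fun y : ℝ => (min y 0)^2) =ᶠ[nhds x] (fun _ : ℝ => (0:ℝ)) := by
      filter_upwards [Ioi_mem_nhds hx] with y hy
      rw [min_eq_right (le_of_lt hy)]; ring
    rw [min_eq_right hx.le]
    simpa using (hasDerivAt_const x (0:ℝ)).congr_of_eventuallyEq h2

private lemma bnd0 (K S al ph r1 m r2 x c a0 a1 a8 m0 m1 m8 MP : ℝ)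
    (hal : 0 ≤ al) (hph : |ph| ≤ MP) (hc : 0 ≤ c) (hr1 : 0 ≤ r1) (hm : 0 ≤ m)
    (hr2 : 0 ≤ r2) (hx : 0 ≤ x) (hS : 0 ≤ S)
    (ha0 : a0 = -m0) (hm0 : 0 ≤ m0) (hm1 : -a1 ≤ m1) (hm8 : -a8 ≤ m8)
    (hS0 : m0 ≤ S) (hS1 : m1 ≤ S) (hS8 : m8 ≤ S)
    (hK : MP + r1 + m + r2 + x ≤ K) :
    -(al - (ph + r1 + m) * a0 + r2 * a1 + x * a8 - c * a0) ≤ K * S := by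
  subst ha0
  have hMP : 0 ≤ MP := le_trans (abs_nonneg ph) hph
  have h1 : -MP ≤ ph := neg_le_of_abs_le hph
  nlinarith [mul_nonneg (by linarith : (0:ℝ) ≤ ph + MP) hm0,
    mul_nonneg (by linarith : (0:ℝ) ≤ r1 + m + c) hm0,
    mul_le_mul_of_nonneg_left hS0 hMP,
    mul_nonneg hr2 (by linarith : (0:ℝ) ≤ m1 + a1),
    mul_le_mul_of_nonneg_left hS1 hr2,
    mul_nonneg hx (by linarith : (0:ℝ) ≤ m8 + a8),
    mul_le_mul_of_nonneg_left hS8 hx,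
    mul_le_mul_of_nonneg_right hK hS,
    mul_nonneg hr1 hS, mul_nonneg hm hS]

private lemma bnd1 (K S al ph r1 m r2 a0 a1 a8 m0 m1 m8 MP : ℝ)
    (hal : 0 ≤ al) (hph : |ph| ≤ MP) (hr1 : 0 ≤ r1) (hm : 0 ≤ m)
    (hr2 : 0 ≤ r2) (hS : 0 ≤ S)
    (ha1 : a1 = -m1) (hm1 : 0 ≤ m1) (hm0 : -a0 ≤ m0) (hm8 : -a8 ≤ m8)
    (hS1 : m1 ≤ S) (hS08 : m0 + m8 ≤ S)
    (hK : MP + r1 + m + r2 ≤ K) :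
    -(al - (ph + r1 + m) * a1 + r2 * (a0 + a8)) ≤ K * S := by
  subst ha1
  have hMP : 0 ≤ MP := le_trans (abs_nonneg ph) hph
  have h1 : -MP ≤ ph := neg_le_of_abs_le hph
  nlinarith [mul_nonneg (by linarith : (0:ℝ) ≤ ph + MP) hm1,
    mul_nonneg (by linarith : (0:ℝ) ≤ r1 + m) hm1,
    mul_le_mul_of_nonneg_left hS1 hMP,
    mul_nonneg hr2 (by linarith : (0:ℝ) ≤ m0 + a0),
    mul_nonneg hr2 (by linarith : (0:ℝ) ≤ m8 + a8),
    mul_le_mul_of_nonneg_left hS08 hr2,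
    mul_le_mul_of_nonneg_right hK hS,
    mul_nonneg hr1 hS, mul_nonneg hm hS]

private lemma bnd2 (K S dA r1 m dC vb r2 y c b2 b3 b4 b6 m2 m3 m4 m6 : ℝ)
    (hdA : 0 ≤ dA) (hr1 : 0 ≤ r1) (hm : 0 ≤ m) (hdC : 0 ≤ dC) (hvb : 0 ≤ vb)
    (hr2 : 0 ≤ r2) (hy : 0 ≤ y) (hc : 0 ≤ c) (hS : 0 ≤ S)
    (hb2 : b2 = -m2) (hm2 : 0 ≤ m2) (hm3 : -b3 ≤ m3) (hm4 : -b4 ≤ m4) (hm6 : -b6 ≤ m6)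
    (hS3 : m3 ≤ S) (hS4 : m4 ≤ S) (hS6 : m6 ≤ S)
    (hK : dA + r1 + m + dC + vb + r2 + y ≤ K) :
    -(dA * b4 - (r1 + m + dC + vb) * b2 + r2 * b3 + y * b6 - c * b2) ≤ K * S := by
  subst hb2
  nlinarith [mul_nonneg hdA (by linarith : (0:ℝ) ≤ m4 + b4),
    mul_le_mul_of_nonneg_left hS4 hdA,
    mul_nonneg (by linarith : (0:ℝ) ≤ r1 + m + dC + vb + c) hm2,
    mul_nonneg hr2 (by linarith : (0:ℝ) ≤ m3 + b3),
    mul_le_mul_of_nonneg_left hS3 hr2,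
    mul_nonneg hy (by linarith : (0:ℝ) ≤ m6 + b6),
    mul_le_mul_of_nonneg_left hS6 hy,
    mul_le_mul_of_nonneg_right hK hS,
    mul_nonneg (by linarith : (0:ℝ) ≤ r1 + m + dC + vb) hS]

private lemma bnd45 (K S ph E ME MP MX r1 m dA r2 a0 a4 a5 m0 m4 m5 : ℝ)
    (hph : |ph| ≤ MP) (hlow : -(E * S) ≤ ph) (hE : E ≤ ME) (hE0 : 0 ≤ E)
    (ha0M : |a0| ≤ MX) (hr1 : 0 ≤ r1) (hm : 0 ≤ m) (hdA : 0 ≤ dA) (hr2 : 0 ≤ r2)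
    (hS : 0 ≤ S)
    (ha4 : a4 = -m4) (hm4 : 0 ≤ m4) (hm0 : -a0 ≤ m0) (hm0' : 0 ≤ m0) (hm5 : -a5 ≤ m5)
    (hS0 : m0 ≤ S) (hS5 : m5 ≤ S)
    (hK : MP + MX * ME + r1 + m + dA + r2 ≤ K) :
    -(ph * a0 - (r1 + m + dA) * a4 + r2 * a5) ≤ K * S := by
  subst ha4
  have hMP : 0 ≤ MP := le_trans (abs_nonneg ph) hph
  have hME : 0 ≤ ME := hE0.trans hE
  have hMX : 0 ≤ MX := le_trans (abs_nonneg a0) ha0M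
  have hstep : -(ph * a0) ≤ MP * m0 + MX * ME * S := by
    rcases le_or_gt a0 0 with h | h
    · have f1 : ph * (-a0) ≤ MP * (-a0) :=
        mul_le_mul_of_nonneg_right (le_trans (le_abs_self ph) hph) (by linarith)
      have f2 : MP * (-a0) ≤ MP * m0 := mul_le_mul_of_nonneg_left hm0 hMP
      nlinarith [mul_nonneg (mul_nonneg hMX hME) hS]
    · have f1 : (-ph) * a0 ≤ (E * S) * a0 :=
        mul_le_mul_of_nonneg_right (by linarith) h.le
      have f2 : E * S * a0 ≤ E * S * MX :=
        mul_le_mul_of_nonneg_left (le_trans (le_abs_self a0) ha0M) (mul_nonneg hE0 hS)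
      have f3 : E * S * MX ≤ ME * S * MX :=
        mul_le_mul_of_nonneg_right (mul_le_mul_of_nonneg_right hE hS) hMX
      nlinarith [mul_nonneg hMP hm0']
  nlinarith [hstep, mul_le_mul_of_nonneg_left hS0 hMP,
    mul_nonneg hr2 (by linarith : (0:ℝ) ≤ m5 + a5),
    mul_le_mul_of_nonneg_left hS5 hr2,
    mul_nonneg (by linarith : (0:ℝ) ≤ r1 + m + dA) hm4,
    mul_le_mul_of_nonneg_right hK hS,
    mul_nonneg (by linarith : (0:ℝ) ≤ r1 + m + dA) hS]

private lemma bnd67 (K S y r1 m vb r2 c Mc b2 b6 b7 m2 m6 m7 : ℝ)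
    (hy : 0 ≤ y) (hr1 : 0 ≤ r1) (hm : 0 ≤ m) (hvb : 0 ≤ vb) (hr2 : 0 ≤ r2)
    (hc : 0 ≤ c) (hcM : c ≤ Mc) (hS : 0 ≤ S)
    (hb6 : b6 = -m6) (hm6 : 0 ≤ m6) (hm2 : -b2 ≤ m2) (hm2' : 0 ≤ m2) (hm7 : -b7 ≤ m7)
    (hS2 : m2 ≤ S) (hS7 : m7 ≤ S)
    (hK : y + r1 + m + vb + r2 + Mc ≤ K) :
    -(-(y + r1 + m) * b6 + vb * b2 + r2 * b7 + c * b2) ≤ K * S := by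
  subst hb6
  have hMc : 0 ≤ Mc := hc.trans hcM
  nlinarith [mul_nonneg (by linarith : (0:ℝ) ≤ y + r1 + m) hm6,
    mul_nonneg hvb (by linarith : (0:ℝ) ≤ m2 + b2),
    mul_le_mul_of_nonneg_left hS2 hvb,
    mul_nonneg hr2 (by linarith : (0:ℝ) ≤ m7 + b7),
    mul_le_mul_of_nonneg_left hS7 hr2,
    mul_nonneg hc (by linarith : (0:ℝ) ≤ m2 + b2),
    mul_le_mul_of_nonneg_right hcM hm2',
    mul_le_mul_of_nonneg_left hS2 hMc,
    mul_le_mul_of_nonneg_right hK hS,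
    mul_nonneg (by linarith : (0:ℝ) ≤ y + r1 + m) hS,
    mul_nonneg hvb hS, mul_nonneg hr2 hS]

private lemma bnd8 (K S x r1 m c Mc a0 a8 m0 m8 : ℝ)
    (hx : 0 ≤ x) (hr1 : 0 ≤ r1) (hm : 0 ≤ m) (hc : 0 ≤ c) (hcM : c ≤ Mc) (hS : 0 ≤ S)
    (ha8 : a8 = -m8) (hm8 : 0 ≤ m8) (hm0 : -a0 ≤ m0) (hm0' : 0 ≤ m0) (hS0 : m0 ≤ S)
    (hK : x + r1 + m + Mc ≤ K) :
    -(-(x + r1 + m) * a8 + c * a0) ≤ K * S := by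
  subst ha8
  have hMc : 0 ≤ Mc := hc.trans hcM
  nlinarith [mul_nonneg (by linarith : (0:ℝ) ≤ x + r1 + m) hm8,
    mul_nonneg hc (by linarith : (0:ℝ) ≤ m0 + a0),
    mul_le_mul_of_nonneg_right hcM hm0',
    mul_le_mul_of_nonneg_left hS0 hMc,
    mul_le_mul_of_nonneg_right hK hS,
    mul_nonneg (by linarith : (0:ℝ) ≤ x + r1 + m) hS]

end AuxHIV



noncomputable section

namespace HIVModel

/-- State vector indexing: `X = (S_H, S_L, I_CH, I_CL, I_AH, I_AL, T_H, T_L, P)`,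
i.e. `X 0 = S_H`, `X 1 = S_L`, `X 2 = I_CH`, `X 3 = I_CL`, `X 4 = I_AH`, `X 5 = I_AL`,
`X 6 = T_H`, `X 7 = T_L`, `X 8 = P`. -/
abbrev State := Fin 9 → ℝ

/-- Total population `N`. -/
def Ntot (X : State) : ℝ := X 0 + X 1 + X 2 + X 3 + X 4 + X 5 + X 6 + X 7 + X 8

/-- High-risk population `N_H = S_H + I_AH + I_CH + P + T_H`. -/
def NH (X : State) : ℝ := X 0 + X 4 + X 2 + X 8 + X 6

/-- Low-risk population `N_L = S_L + I_AL + I_CL + T_L`. -/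
def NL (X : State) : ℝ := X 1 + X 5 + X 3 + X 7

/-- Total contact rate `θ = λ_H N_H + λ_L N_L`. -/
def theta (lamH lamL : ℝ) (X : State) : ℝ := lamH * NH X + lamL * NL X

/-- Per-contact transmission probability at the mixing site. -/
def sigma (betaA betaC lamH lamL : ℝ) (X : State) : ℝ :=
  (betaA * (lamH * X 4 + lamL * X 5) + betaC * (lamH * X 2 + lamL * X 3)) /
    theta lamH lamL X

/-- Per-capita transmission rate for high-risk susceptibles. -/
def phiH (betaA betaC lamH lamL piv : ℝ) (X : State) : ℝ :=
  piv * lamH * (betaA * X 4 + betaC * X 2) / NH X +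
    (1 - piv) * lamH * sigma betaA betaC lamH lamL X

/-- Per-capita transmission rate for low-risk susceptibles. -/
def phiL (betaA betaC lamH lamL piv : ℝ) (X : State) : ℝ :=
  piv * lamL * (betaA * X 5 + betaC * X 3) / NL X +
    (1 - piv) * lamL * sigma betaA betaC lamH lamL X

/-- PrEP enrollment function `ζ_P = r_b S_H / (r_b N_H + N_L)`. -/
def zetaP (rb : ℝ) (X : State) : ℝ := rb * X 0 / (rb * NH X + NL X)

/-- TaP enrollment function for high-risk `ζ_{T,H} = r_b I_CH / (r_b N_H + N_L)`. -/
def zetaTH (rb : ℝ) (X : State) : ℝ := rb * X 2 / (rb * NH X + NL X)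

/-- TaP enrollment function for low-risk `ζ_{T,L} = I_CL / (r_b N_H + N_L)`. -/
def zetaTL (rb : ℝ) (X : State) : ℝ := X 3 / (rb * NH X + NL X)

/-- Right-hand side of the HIV model system with controls `uP`, `uT`. -/
def rhs (alphaH alphaL rhoH rhoL mu x y deltaA deltaC vb betaA betaC lamH lamL piv rb : ℝ)
    (X : State) (uP uT : ℝ) : State :=
  ![alphaH - (phiH betaA betaC lamH lamL piv X + rhoH + mu) * X 0 + rhoL * X 1
      + x * X 8 - uP * zetaP rb X * Ntot X,
    alphaL - (phiL betaA betaC lamH lamL piv X + rhoL + mu) * X 1 + rhoH * (X 0 + X 8),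
    deltaA * X 4 - (rhoH + mu + deltaC + vb) * X 2 + rhoL * X 3 + y * X 6
      - uT * zetaTH rb X * Ntot X,
    deltaA * X 5 - (rhoL + mu + deltaC + vb) * X 3 + rhoH * X 2 + y * X 7
      - uT * zetaTL rb X * Ntot X,
    phiH betaA betaC lamH lamL piv X * X 0 - (rhoH + mu + deltaA) * X 4 + rhoL * X 5,
    phiL betaA betaC lamH lamL piv X * X 1 - (rhoL + mu + deltaA) * X 5 + rhoH * X 4,
    -(y + rhoH + mu) * X 6 + vb * X 2 + rhoL * X 7 + uT * zetaTH rb X * Ntot X,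
    -(y + rhoL + mu) * X 7 + vb * X 3 + rhoH * X 6 + uT * zetaTL rb X * Ntot X,
    -(x + rhoH + mu) * X 8 + uP * zetaP rb X * Ntot X]

end HIVModel

set_option maxHeartbeats 2000000 in
open HIVModel in
/-- Nonnegativity of solutions of the HIV model system: with nonnegative parameters,
`π ∈ [0,1]`, `r_b > 0`, continuous nonnegative controls `u_P, u_T` on `[t₀, T]`, and a
solution `X` of `X'(t) = F(X(t), u_P(t), u_T(t))` on `[t₀, T]` along which
`N_H > 0`, `N_L > 0`, `θ > 0` and `r_b N_H + N_L > 0`, if all components of `X(t₀)` are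
nonnegative then all components of `X(t)` are nonnegative for every `t ∈ [t₀, T]`. -/
theorem hiv_solution_nonneg
    (alphaH alphaL rhoH rhoL mu x y deltaA deltaC vb betaA betaC lamH lamL piv rb : ℝ)
    (halphaH : 0 ≤ alphaH) (halphaL : 0 ≤ alphaL) (hrhoH : 0 ≤ rhoH) (hrhoL : 0 ≤ rhoL)
    (hmu : 0 ≤ mu) (hx : 0 ≤ x) (hy : 0 ≤ y) (hdeltaA : 0 ≤ deltaA) (hdeltaC : 0 ≤ deltaC)
    (hvb : 0 ≤ vb) (hbetaA : 0 ≤ betaA) (hbetaC : 0 ≤ betaC)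
    (hlamH : 0 ≤ lamH) (hlamL : 0 ≤ lamL)
    (hpiv : piv ∈ Set.Icc (0 : ℝ) 1) (hrb : 0 < rb)
    (t₀ T : ℝ) (ht : t₀ ≤ T)
    (uP uT : ℝ → ℝ)
    (huP_cont : ContinuousOn uP (Set.Icc t₀ T)) (huT_cont : ContinuousOn uT (Set.Icc t₀ T))
    (huP : ∀ t ∈ Set.Icc t₀ T, 0 ≤ uP t) (huT : ∀ t ∈ Set.Icc t₀ T, 0 ≤ uT t)
    (X : ℝ → State)
    (hX : ∀ t ∈ Set.Icc t₀ T,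
      HasDerivAt X
        (rhs alphaH alphaL rhoH rhoL mu x y deltaA deltaC vb betaA betaC lamH lamL piv rb
          (X t) (uP t) (uT t)) t)
    (hNH : ∀ t ∈ Set.Icc t₀ T, 0 < NH (X t))
    (hNL : ∀ t ∈ Set.Icc t₀ T, 0 < NL (X t))
    (htheta : ∀ t ∈ Set.Icc t₀ T, 0 < theta lamH lamL (X t))
    (hden : ∀ t ∈ Set.Icc t₀ T, 0 < rb * NH (X t) + NL (X t))
    (hX₀ : ∀ i, 0 ≤ X t₀ i) :
    ∀ t ∈ Set.Icc t₀ T, ∀ i, 0 ≤ X t i := by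
  set I : Set ℝ := Set.Icc t₀ T with hIdef
  have ht₀I : t₀ ∈ I := Set.left_mem_Icc.mpr ht
  have hXi : ∀ (i : Fin 9), ∀ t ∈ I, HasDerivAt (fun s => X s i)
      (rhs alphaH alphaL rhoH rhoL mu x y deltaA deltaC vb betaA betaC lamH lamL piv rb
        (X t) (uP t) (uT t) i) t :=
    fun i t htI => hasDerivAt_pi.1 (hX t htI) i
  have hXc : ContinuousOn X I := fun t htI => (hX t htI).continuousAt.continuousWithinAt
  have hXci : ∀ i : Fin 9, ContinuousOn (fun s => X s i) I :=
    fun i => (continuous_apply i).comp_continuousOn hXc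
  -- continuity of auxiliary quantities
  have hcNH : ContinuousOn (fun s => NH (X s)) I := by
    simp only [NH]
    exact ((((hXci 0).add (hXci 4)).add (hXci 2)).add (hXci 8)).add (hXci 6)
  have hcNL : ContinuousOn (fun s => NL (X s)) I := by
    simp only [NL]
    exact (((hXci 1).add (hXci 5)).add (hXci 3)).add (hXci 7)
  have hcNt : ContinuousOn (fun s => Ntot (X s)) I := by
    have hEq : (fun s => Ntot (X s)) = fun s => NH (X s) + NL (X s) := by
      funext s; simp only [Ntot, NH, NL]; ring
    rw [hEq]; exact hcNH.add hcNL
  have hcth : ContinuousOn (fun s => theta lamH lamL (X s)) I := by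
    simp only [theta]
    exact (continuousOn_const.mul hcNH).add (continuousOn_const.mul hcNL)
  have hcden : ContinuousOn (fun s => rb * NH (X s) + NL (X s)) I :=
    (continuousOn_const.mul hcNH).add hcNL
  have hNHne : ∀ s ∈ I, NH (X s) ≠ 0 := fun s hs => (hNH s hs).ne'
  have hthne : ∀ s ∈ I, theta lamH lamL (X s) ≠ 0 := fun s hs => (htheta s hs).ne'
  have hdenne : ∀ s ∈ I, rb * NH (X s) + NL (X s) ≠ 0 := fun s hs => (hden s hs).ne'
  have hNLne : ∀ s ∈ I, NL (X s) ≠ 0 := fun s hs => (hNL s hs).ne'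
  have hcpH : ContinuousOn (fun s => phiH betaA betaC lamH lamL piv (X s)) I := by
    simp only [phiH, sigma]
    exact ((continuousOn_const.mul ((continuousOn_const.mul (hXci 4)).add
        (continuousOn_const.mul (hXci 2)))).div hcNH hNHne).add
      (continuousOn_const.mul (((continuousOn_const.mul ((continuousOn_const.mul
        (hXci 4)).add (continuousOn_const.mul (hXci 5)))).add
        (continuousOn_const.mul ((continuousOn_const.mul (hXci 2)).add
        (continuousOn_const.mul (hXci 3))))).div hcth hthne))
  have hcpL : ContinuousOn (fun s => phiL betaA betaC lamH lamL piv (X s)) I := by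
    simp only [phiL, sigma]
    exact ((continuousOn_const.mul ((continuousOn_const.mul (hXci 5)).add
        (continuousOn_const.mul (hXci 3)))).div hcNL hNLne).add
      (continuousOn_const.mul (((continuousOn_const.mul ((continuousOn_const.mul
        (hXci 4)).add (continuousOn_const.mul (hXci 5)))).add
        (continuousOn_const.mul ((continuousOn_const.mul (hXci 2)).add
        (continuousOn_const.mul (hXci 3))))).div hcth hthne))
  have hccP : ContinuousOn (fun s => uP s * rb * Ntot (X s) / (rb * NH (X s) + NL (X s))) I :=
    ((huP_cont.mul continuousOn_const).mul hcNt).div hcden hdenne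
  have hccT : ContinuousOn (fun s => uT s * rb * Ntot (X s) / (rb * NH (X s) + NL (X s))) I :=
    ((huT_cont.mul continuousOn_const).mul hcNt).div hcden hdenne
  have hccTL : ContinuousOn (fun s => uT s * Ntot (X s) / (rb * NH (X s) + NL (X s))) I :=
    (huT_cont.mul hcNt).div hcden hdenne
  have hceH : ContinuousOn (fun s => piv * lamH * (betaA + betaC) / NH (X s)
      + (1 - piv) * lamH * ((betaA + betaC) * (lamH + lamL)) / theta lamH lamL (X s)) I :=
    (continuousOn_const.div hcNH hNHne).add (continuousOn_const.div hcth hthne)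
  have hceL : ContinuousOn (fun s => piv * lamL * (betaA + betaC) / NL (X s)
      + (1 - piv) * lamL * ((betaA + betaC) * (lamH + lamL)) / theta lamH lamL (X s)) I :=
    (continuousOn_const.div hcNL hNLne).add (continuousOn_const.div hcth hthne)
  -- bounds by compactness
  obtain ⟨MX, hMX⟩ := isCompact_Icc.exists_bound_of_continuousOn hXc
  obtain ⟨MH, hMH⟩ := isCompact_Icc.exists_bound_of_continuousOn hcpH
  obtain ⟨ML, hML⟩ := isCompact_Icc.exists_bound_of_continuousOn hcpL
  obtain ⟨McP, hMcP⟩ := isCompact_Icc.exists_bound_of_continuousOn hccP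
  obtain ⟨McT, hMcT⟩ := isCompact_Icc.exists_bound_of_continuousOn hccT
  obtain ⟨McTL, hMcTL⟩ := isCompact_Icc.exists_bound_of_continuousOn hccTL
  obtain ⟨MEH, hMEH⟩ := isCompact_Icc.exists_bound_of_continuousOn hceH
  obtain ⟨MEL, hMEL⟩ := isCompact_Icc.exists_bound_of_continuousOn hceL
  have hMX0 : 0 ≤ MX := (norm_nonneg _).trans (hMX t₀ ht₀I)
  have hMH0 : 0 ≤ MH := (norm_nonneg _).trans (hMH t₀ ht₀I)
  have hML0 : 0 ≤ ML := (norm_nonneg _).trans (hML t₀ ht₀I)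
  have hMcP0 : 0 ≤ McP := (norm_nonneg _).trans (hMcP t₀ ht₀I)
  have hMcT0 : 0 ≤ McT := (norm_nonneg _).trans (hMcT t₀ ht₀I)
  have hMcTL0 : 0 ≤ McTL := (norm_nonneg _).trans (hMcTL t₀ ht₀I)
  have hMEH0 : 0 ≤ MEH := (norm_nonneg _).trans (hMEH t₀ ht₀I)
  have hMEL0 : 0 ≤ MEL := (norm_nonneg _).trans (hMEL t₀ ht₀I)
  have hMXEH : 0 ≤ MX * MEH := mul_nonneg hMX0 hMEH0
  have hMXEL : 0 ≤ MX * MEL := mul_nonneg hMX0 hMEL0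
  set K : ℝ := MH + ML + McP + McT + McTL + MX * MEH + MX * MEL
      + rhoH + rhoL + mu + x + y + deltaA + deltaC + vb with hKdef
  have hK0 : 0 ≤ K := by rw [hKdef]; linarith only [hMH0, hML0, hMcP0, hMcT0, hMcTL0, hMXEH, hMXEL, hrhoH, hrhoL, hmu, hx, hy, hdeltaA, hdeltaC, hvb]
  set g : ℝ → ℝ := fun s => ∑ i : Fin 9, (min (X s i) 0)^2 with hgdef
  have hg' : ∀ t ∈ I, HasDerivAt g (∑ i : Fin 9, 2 * min (X t i) 0 *
      rhs alphaH alphaL rhoH rhoL mu x y deltaA deltaC vb betaA betaC lamH lamL piv rb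
        (X t) (uP t) (uT t) i) t := by
    intro t htI
    have := HasDerivAt.fun_sum
      (fun i (_ : i ∈ Finset.univ) => (hasDerivAt_minsq (X t i)).comp t (hXi i t htI))
    simpa [hgdef, Function.comp] using this
  -- the key differential inequality
  have key : ∀ t ∈ I, (∑ i : Fin 9, 2 * min (X t i) 0 *
      rhs alphaH alphaL rhoH rhoL mu x y deltaA deltaC vb betaA betaC lamH lamL piv rb
        (X t) (uP t) (uT t) i) ≤ 18 * K * g t := by
    intro t htI
    set m : Fin 9 → ℝ := fun i => -(min (X t i) 0) with hmdef
    have hm0' : ∀ i, 0 ≤ m i := fun i => by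
      simp only [hmdef]; exact neg_nonneg.mpr (min_le_right _ _)
    have hma : ∀ i, -(X t i) ≤ m i := fun i => by
      simp only [hmdef]; exact neg_le_neg (min_le_left _ _)
    set S : ℝ := ∑ i : Fin 9, m i with hSdef
    have hS0 : 0 ≤ S := Finset.sum_nonneg fun i _ => hm0' i
    have hmS : ∀ i, m i ≤ S :=
      fun i => Finset.single_le_sum (fun j _ => hm0' j) (Finset.mem_univ i)
    have hS08 : m 0 + m 8 ≤ S := by
      have h := Finset.sum_le_sum_of_subset_of_nonneg
        (Finset.subset_univ ({0, 8} : Finset (Fin 9))) (fun i _ _ => hm0' i)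
      rwa [Finset.sum_pair (by decide : (0 : Fin 9) ≠ 8)] at h
    have htht := htheta t htI
    have hNHt := hNH t htI
    have hNLt := hNL t htI
    have hdent := hden t htI
    have hdentne : rb * NH (X t) + NL (X t) ≠ 0 := hdent.ne'
    have hNtott : 0 < Ntot (X t) := by
      have hEq : Ntot (X t) = NH (X t) + NL (X t) := by simp only [Ntot, NH, NL]; ring
      rw [hEq]; linarith only [hNHt, hNLt]
    have hMHt : |phiH betaA betaC lamH lamL piv (X t)| ≤ MH := by
      have h := hMH t htI; rwa [Real.norm_eq_abs] at h
    have hMLt : |phiL betaA betaC lamH lamL piv (X t)| ≤ ML := by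
      have h := hML t htI; rwa [Real.norm_eq_abs] at h
    have hXM : ∀ i, |X t i| ≤ MX := fun i => by
      have h1 : ‖X t i‖ ≤ ‖X t‖ := norm_le_pi_norm (X t) i
      have h2 := hMX t htI
      rw [Real.norm_eq_abs] at h1
      linarith only [h1, h2]
    have hcPt0 : 0 ≤ uP t * rb * Ntot (X t) / (rb * NH (X t) + NL (X t)) :=
      div_nonneg (mul_nonneg (mul_nonneg (huP t htI) hrb.le) hNtott.le) hdent.le
    have hcTt0 : 0 ≤ uT t * rb * Ntot (X t) / (rb * NH (X t) + NL (X t)) :=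
      div_nonneg (mul_nonneg (mul_nonneg (huT t htI) hrb.le) hNtott.le) hdent.le
    have hcTLt0 : 0 ≤ uT t * Ntot (X t) / (rb * NH (X t) + NL (X t)) :=
      div_nonneg (mul_nonneg (huT t htI) hNtott.le) hdent.le
    have hcPtM : uP t * rb * Ntot (X t) / (rb * NH (X t) + NL (X t)) ≤ McP := by
      have h := hMcP t htI; rw [Real.norm_eq_abs] at h; exact (le_abs_self _).trans h
    have hcTtM : uT t * rb * Ntot (X t) / (rb * NH (X t) + NL (X t)) ≤ McT := by
      have h := hMcT t htI; rw [Real.norm_eq_abs] at h; exact (le_abs_self _).trans h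
    have hcTLtM : uT t * Ntot (X t) / (rb * NH (X t) + NL (X t)) ≤ McTL := by
      have h := hMcTL t htI; rw [Real.norm_eq_abs] at h; exact (le_abs_self _).trans h
    have hplH : 0 ≤ piv * lamH := mul_nonneg hpiv.1 hlamH
    have hplL : 0 ≤ piv * lamL := mul_nonneg hpiv.1 hlamL
    have hqlH : 0 ≤ (1 - piv) * lamH := mul_nonneg (by linarith only [hpiv.2]) hlamH
    have hqlL : 0 ≤ (1 - piv) * lamL := mul_nonneg (by linarith only [hpiv.2]) hlamL
    have hEHt0 : 0 ≤ piv * lamH * (betaA + betaC) / NH (X t)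
        + (1 - piv) * lamH * ((betaA + betaC) * (lamH + lamL)) / theta lamH lamL (X t) :=
      add_nonneg
        (div_nonneg (mul_nonneg hplH (by linarith only [hbetaA, hbetaC])) hNHt.le)
        (div_nonneg (mul_nonneg hqlH (mul_nonneg (by linarith only [hbetaA, hbetaC]) (by linarith only [hlamH, hlamL]))) htht.le)
    have hELt0 : 0 ≤ piv * lamL * (betaA + betaC) / NL (X t)
        + (1 - piv) * lamL * ((betaA + betaC) * (lamH + lamL)) / theta lamH lamL (X t) :=
      add_nonneg
        (div_nonneg (mul_nonneg hplL (by linarith only [hbetaA, hbetaC])) hNLt.le)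
        (div_nonneg (mul_nonneg hqlL (mul_nonneg (by linarith only [hbetaA, hbetaC]) (by linarith only [hlamH, hlamL]))) htht.le)
    have hEHtM : piv * lamH * (betaA + betaC) / NH (X t)
        + (1 - piv) * lamH * ((betaA + betaC) * (lamH + lamL)) / theta lamH lamL (X t) ≤ MEH := by
      have h := hMEH t htI; rw [Real.norm_eq_abs] at h; exact (le_abs_self _).trans h
    have hELtM : piv * lamL * (betaA + betaC) / NL (X t)
        + (1 - piv) * lamL * ((betaA + betaC) * (lamH + lamL)) / theta lamH lamL (X t) ≤ MEL := by
      have h := hMEL t htI; rw [Real.norm_eq_abs] at h; exact (le_abs_self _).trans h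
    have ha2S : 0 ≤ X t 2 + S := by linarith only [hma 2, hmS 2]
    have ha3S : 0 ≤ X t 3 + S := by linarith only [hma 3, hmS 3]
    have ha4S : 0 ≤ X t 4 + S := by linarith only [hma 4, hmS 4]
    have ha5S : 0 ≤ X t 5 + S := by linarith only [hma 5, hmS 5]
    have hsig : -((betaA + betaC) * (lamH + lamL) * S) / theta lamH lamL (X t)
        ≤ sigma betaA betaC lamH lamL (X t) := by
      rw [sigma]
      refine (div_le_div_iff_of_pos_right htht).mpr ?_
      linarith only [mul_nonneg (mul_nonneg hbetaA hlamH) ha4S,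
        mul_nonneg (mul_nonneg hbetaA hlamL) ha5S,
        mul_nonneg (mul_nonneg hbetaC hlamH) ha2S,
        mul_nonneg (mul_nonneg hbetaC hlamL) ha3S]
    have hlowH : -((piv * lamH * (betaA + betaC) / NH (X t)
        + (1 - piv) * lamH * ((betaA + betaC) * (lamH + lamL)) / theta lamH lamL (X t)) * S)
        ≤ phiH betaA betaC lamH lamL piv (X t) := by
      have h1 : -(piv * lamH * (betaA + betaC) * S) / NH (X t)
          ≤ piv * lamH * (betaA * X t 4 + betaC * X t 2) / NH (X t) := by
        refine (div_le_div_iff_of_pos_right hNHt).mpr ?_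
        linarith only [mul_nonneg (mul_nonneg hplH hbetaA) ha4S,
          mul_nonneg (mul_nonneg hplH hbetaC) ha2S]
      have h3 := mul_le_mul_of_nonneg_left hsig hqlH
      rw [phiH]
      calc -((piv * lamH * (betaA + betaC) / NH (X t)
          + (1 - piv) * lamH * ((betaA + betaC) * (lamH + lamL)) / theta lamH lamL (X t)) * S)
          = -(piv * lamH * (betaA + betaC) * S) / NH (X t)
            + (1 - piv) * lamH * (-((betaA + betaC) * (lamH + lamL) * S)
              / theta lamH lamL (X t)) := by ring
        _ ≤ _ := add_le_add h1 h3
    have hlowL : -((piv * lamL * (betaA + betaC) / NL (X t)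
        + (1 - piv) * lamL * ((betaA + betaC) * (lamH + lamL)) / theta lamH lamL (X t)) * S)
        ≤ phiL betaA betaC lamH lamL piv (X t) := by
      have h1 : -(piv * lamL * (betaA + betaC) * S) / NL (X t)
          ≤ piv * lamL * (betaA * X t 5 + betaC * X t 3) / NL (X t) := by
        refine (div_le_div_iff_of_pos_right hNLt).mpr ?_
        linarith only [mul_nonneg (mul_nonneg hplL hbetaA) ha5S,
          mul_nonneg (mul_nonneg hplL hbetaC) ha3S]
      have h3 := mul_le_mul_of_nonneg_left hsig hqlL
      rw [phiL]
      calc -((piv * lamL * (betaA + betaC) / NL (X t)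
          + (1 - piv) * lamL * ((betaA + betaC) * (lamH + lamL)) / theta lamH lamL (X t)) * S)
          = -(piv * lamL * (betaA + betaC) * S) / NL (X t)
            + (1 - piv) * lamL * (-((betaA + betaC) * (lamH + lamL) * S)
              / theta lamH lamL (X t)) := by ring
        _ ≤ _ := add_le_add h1 h3
    -- componentwise bounds
    have hcomp : ∀ i : Fin 9, X t i ≤ 0 →
        -(rhs alphaH alphaL rhoH rhoL mu x y deltaA deltaC vb betaA betaC lamH lamL piv rb
          (X t) (uP t) (uT t) i) ≤ K * S := by
      intro i hi
      have hmi : X t i = -(m i) := by simp [hmdef, min_eq_left hi]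
      have hzP : uP t * zetaP rb (X t) * Ntot (X t)
          = (uP t * rb * Ntot (X t) / (rb * NH (X t) + NL (X t))) * X t 0 := by
        rw [zetaP]; field_simp
      have hzT : uT t * zetaTH rb (X t) * Ntot (X t)
          = (uT t * rb * Ntot (X t) / (rb * NH (X t) + NL (X t))) * X t 2 := by
        rw [zetaTH]; field_simp
      have hzTL : uT t * zetaTL rb (X t) * Ntot (X t)
          = (uT t * Ntot (X t) / (rb * NH (X t) + NL (X t))) * X t 3 := by
        rw [zetaTL]; field_simp
      fin_cases i
      · show -(rhs alphaH alphaL rhoH rhoL mu x y deltaA deltaC vb betaA betaC lamH lamL piv rb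
          (X t) (uP t) (uT t) 0) ≤ K * S
        have e : rhs alphaH alphaL rhoH rhoL mu x y deltaA deltaC vb betaA betaC lamH lamL piv rb
            (X t) (uP t) (uT t) 0
            = alphaH - (phiH betaA betaC lamH lamL piv (X t) + rhoH + mu) * X t 0
              + rhoL * X t 1 + x * X t 8 - uP t * zetaP rb (X t) * Ntot (X t) := rfl
        rw [e, hzP]
        exact bnd0 K S alphaH _ rhoH mu rhoL x _ _ _ _ (m 0) (m 1) (m 8) MH
          halphaH hMHt hcPt0 hrhoH hmu hrhoL hx hS0 hmi (hm0' 0) (hma 1) (hma 8)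
          (hmS 0) (hmS 1) (hmS 8) (by rw [hKdef]; linarith only [hMH0, hML0, hMcP0, hMcT0, hMcTL0, hMXEH, hMXEL, hrhoH, hrhoL, hmu, hx, hy, hdeltaA, hdeltaC, hvb])
      · show -(rhs alphaH alphaL rhoH rhoL mu x y deltaA deltaC vb betaA betaC lamH lamL piv rb
          (X t) (uP t) (uT t) 1) ≤ K * S
        have e : rhs alphaH alphaL rhoH rhoL mu x y deltaA deltaC vb betaA betaC lamH lamL piv rb
            (X t) (uP t) (uT t) 1
            = alphaL - (phiL betaA betaC lamH lamL piv (X t) + rhoL + mu) * X t 1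
              + rhoH * (X t 0 + X t 8) := rfl
        rw [e]
        exact bnd1 K S alphaL _ rhoL mu rhoH _ _ _ (m 0) (m 1) (m 8) ML
          halphaL hMLt hrhoL hmu hrhoH hS0 hmi (hm0' 1) (hma 0) (hma 8)
          (hmS 1) hS08 (by rw [hKdef]; linarith only [hMH0, hML0, hMcP0, hMcT0, hMcTL0, hMXEH, hMXEL, hrhoH, hrhoL, hmu, hx, hy, hdeltaA, hdeltaC, hvb])
      · show -(rhs alphaH alphaL rhoH rhoL mu x y deltaA deltaC vb betaA betaC lamH lamL piv rb
          (X t) (uP t) (uT t) 2) ≤ K * S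
        have e : rhs alphaH alphaL rhoH rhoL mu x y deltaA deltaC vb betaA betaC lamH lamL piv rb
            (X t) (uP t) (uT t) 2
            = deltaA * X t 4 - (rhoH + mu + deltaC + vb) * X t 2 + rhoL * X t 3 + y * X t 6
              - uT t * zetaTH rb (X t) * Ntot (X t) := rfl
        rw [e, hzT]
        exact bnd2 K S deltaA rhoH mu deltaC vb rhoL y _ _ _ _ _ (m 2) (m 3) (m 4) (m 6)
          hdeltaA hrhoH hmu hdeltaC hvb hrhoL hy hcTt0 hS0 hmi (hm0' 2) (hma 3) (hma 4)
          (hma 6) (hmS 3) (hmS 4) (hmS 6) (by rw [hKdef]; linarith only [hMH0, hML0, hMcP0, hMcT0, hMcTL0, hMXEH, hMXEL, hrhoH, hrhoL, hmu, hx, hy, hdeltaA, hdeltaC, hvb])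
      · show -(rhs alphaH alphaL rhoH rhoL mu x y deltaA deltaC vb betaA betaC lamH lamL piv rb
          (X t) (uP t) (uT t) 3) ≤ K * S
        have e : rhs alphaH alphaL rhoH rhoL mu x y deltaA deltaC vb betaA betaC lamH lamL piv rb
            (X t) (uP t) (uT t) 3
            = deltaA * X t 5 - (rhoL + mu + deltaC + vb) * X t 3 + rhoH * X t 2 + y * X t 7
              - uT t * zetaTL rb (X t) * Ntot (X t) := rfl
        rw [e, hzTL]
        exact bnd2 K S deltaA rhoL mu deltaC vb rhoH y _ _ _ _ _ (m 3) (m 2) (m 5) (m 7)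
          hdeltaA hrhoL hmu hdeltaC hvb hrhoH hy hcTLt0 hS0 hmi (hm0' 3) (hma 2) (hma 5)
          (hma 7) (hmS 2) (hmS 5) (hmS 7) (by rw [hKdef]; linarith only [hMH0, hML0, hMcP0, hMcT0, hMcTL0, hMXEH, hMXEL, hrhoH, hrhoL, hmu, hx, hy, hdeltaA, hdeltaC, hvb])
      · show -(rhs alphaH alphaL rhoH rhoL mu x y deltaA deltaC vb betaA betaC lamH lamL piv rb
          (X t) (uP t) (uT t) 4) ≤ K * S
        have e : rhs alphaH alphaL rhoH rhoL mu x y deltaA deltaC vb betaA betaC lamH lamL piv rb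
            (X t) (uP t) (uT t) 4
            = phiH betaA betaC lamH lamL piv (X t) * X t 0 - (rhoH + mu + deltaA) * X t 4
              + rhoL * X t 5 := rfl
        rw [e]
        exact bnd45 K S _ _ MEH MH MX rhoH mu deltaA rhoL _ _ _ (m 0) (m 4) (m 5)
          hMHt hlowH hEHtM hEHt0 (hXM 0) hrhoH hmu hdeltaA hrhoL hS0 hmi (hm0' 4)
          (hma 0) (hm0' 0) (hma 5) (hmS 0) (hmS 5) (by rw [hKdef]; linarith only [hMH0, hML0, hMcP0, hMcT0, hMcTL0, hMXEH, hMXEL, hrhoH, hrhoL, hmu, hx, hy, hdeltaA, hdeltaC, hvb])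
      · show -(rhs alphaH alphaL rhoH rhoL mu x y deltaA deltaC vb betaA betaC lamH lamL piv rb
          (X t) (uP t) (uT t) 5) ≤ K * S
        have e : rhs alphaH alphaL rhoH rhoL mu x y deltaA deltaC vb betaA betaC lamH lamL piv rb
            (X t) (uP t) (uT t) 5
            = phiL betaA betaC lamH lamL piv (X t) * X t 1 - (rhoL + mu + deltaA) * X t 5
              + rhoH * X t 4 := rfl
        rw [e]
        exact bnd45 K S _ _ MEL ML MX rhoL mu deltaA rhoH _ _ _ (m 1) (m 5) (m 4)
          hMLt hlowL hELtM hELt0 (hXM 1) hrhoL hmu hdeltaA hrhoH hS0 hmi (hm0' 5)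
          (hma 1) (hm0' 1) (hma 4) (hmS 1) (hmS 4) (by rw [hKdef]; linarith only [hMH0, hML0, hMcP0, hMcT0, hMcTL0, hMXEH, hMXEL, hrhoH, hrhoL, hmu, hx, hy, hdeltaA, hdeltaC, hvb])
      · show -(rhs alphaH alphaL rhoH rhoL mu x y deltaA deltaC vb betaA betaC lamH lamL piv rb
          (X t) (uP t) (uT t) 6) ≤ K * S
        have e : rhs alphaH alphaL rhoH rhoL mu x y deltaA deltaC vb betaA betaC lamH lamL piv rb
            (X t) (uP t) (uT t) 6
            = -(y + rhoH + mu) * X t 6 + vb * X t 2 + rhoL * X t 7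
              + uT t * zetaTH rb (X t) * Ntot (X t) := rfl
        rw [e, hzT]
        exact bnd67 K S y rhoH mu vb rhoL _ McT _ _ _ (m 2) (m 6) (m 7)
          hy hrhoH hmu hvb hrhoL hcTt0 hcTtM hS0 hmi (hm0' 6) (hma 2) (hm0' 2) (hma 7)
          (hmS 2) (hmS 7) (by rw [hKdef]; linarith only [hMH0, hML0, hMcP0, hMcT0, hMcTL0, hMXEH, hMXEL, hrhoH, hrhoL, hmu, hx, hy, hdeltaA, hdeltaC, hvb])
      · show -(rhs alphaH alphaL rhoH rhoL mu x y deltaA deltaC vb betaA betaC lamH lamL piv rb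
          (X t) (uP t) (uT t) 7) ≤ K * S
        have e : rhs alphaH alphaL rhoH rhoL mu x y deltaA deltaC vb betaA betaC lamH lamL piv rb
            (X t) (uP t) (uT t) 7
            = -(y + rhoL + mu) * X t 7 + vb * X t 3 + rhoH * X t 6
              + uT t * zetaTL rb (X t) * Ntot (X t) := rfl
        rw [e, hzTL]
        exact bnd67 K S y rhoL mu vb rhoH _ McTL _ _ _ (m 3) (m 7) (m 6)
          hy hrhoL hmu hvb hrhoH hcTLt0 hcTLtM hS0 hmi (hm0' 7) (hma 3) (hm0' 3) (hma 6)
          (hmS 3) (hmS 6) (by rw [hKdef]; linarith only [hMH0, hML0, hMcP0, hMcT0, hMcTL0, hMXEH, hMXEL, hrhoH, hrhoL, hmu, hx, hy, hdeltaA, hdeltaC, hvb])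
      · show -(rhs alphaH alphaL rhoH rhoL mu x y deltaA deltaC vb betaA betaC lamH lamL piv rb
          (X t) (uP t) (uT t) 8) ≤ K * S
        have e : rhs alphaH alphaL rhoH rhoL mu x y deltaA deltaC vb betaA betaC lamH lamL piv rb
            (X t) (uP t) (uT t) 8
            = -(x + rhoH + mu) * X t 8 + uP t * zetaP rb (X t) * Ntot (X t) := rfl
        rw [e, hzP]
        exact bnd8 K S x rhoH mu _ McP _ _ (m 0) (m 8)
          hx hrhoH hmu hcPt0 hcPtM hS0 hmi (hm0' 8) (hma 0) (hm0' 0) (hmS 0)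
          (by rw [hKdef]; linarith only [hMH0, hML0, hMcP0, hMcT0, hMcTL0, hMXEH, hMXEL, hrhoH, hrhoL, hmu, hx, hy, hdeltaA, hdeltaC, hvb])
    have hterm : ∀ i : Fin 9, 2 * min (X t i) 0 *
        rhs alphaH alphaL rhoH rhoL mu x y deltaA deltaC vb betaA betaC lamH lamL piv rb
          (X t) (uP t) (uT t) i ≤ 2 * K * m i * S := by
      intro i
      rcases le_or_gt (X t i) 0 with h | h
      · have h1 := hcomp i h
        have h2 : min (X t i) 0 = -(m i) := by simp [hmdef]
        rw [h2]
        linarith only [mul_le_mul_of_nonneg_left h1 (by linarith only [hm0' i] : (0:ℝ) ≤ 2 * m i)]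
      · have h2 : min (X t i) 0 = 0 := min_eq_right h.le
        have h3 : m i = 0 := by simp [hmdef, h2]
        rw [h2, h3]
        simp
    calc (∑ i : Fin 9, 2 * min (X t i) 0 *
        rhs alphaH alphaL rhoH rhoL mu x y deltaA deltaC vb betaA betaC lamH lamL piv rb
          (X t) (uP t) (uT t) i)
        ≤ ∑ i : Fin 9, 2 * K * m i * S := Finset.sum_le_sum fun i _ => hterm i
      _ = ∑ i : Fin 9, (2 * K * S) * m i := Finset.sum_congr rfl fun i _ => by ring
      _ = (2 * K * S) * ∑ i : Fin 9, m i := (Finset.mul_sum _ _ _).symm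
      _ = 2 * K * S * S := by rw [← hSdef]
      _ ≤ 18 * K * g t := by
          have hg9 : g t = ∑ i : Fin 9, (m i)^2 := by
            simp only [hgdef]
            exact Finset.sum_congr rfl fun i _ => by simp [hmdef]
          have hsq : S^2 ≤ 9 * ∑ i : Fin 9, (m i)^2 := by
            have h := sq_sum_le_card_mul_sum_sq (s := (Finset.univ : Finset (Fin 9))) (f := m)
            rw [hSdef]
            simpa using h
          rw [hg9]
          linarith only [mul_le_mul_of_nonneg_left hsq (by linarith only [hK0] : (0:ℝ) ≤ 2 * K)]
  -- exponential damping
  set w : ℝ → ℝ := fun s => g s * Real.exp (-(18 * K * s)) with hwdef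
  have hw' : ∀ s ∈ I, HasDerivAt w ((∑ i : Fin 9, 2 * min (X s i) 0 *
      rhs alphaH alphaL rhoH rhoL mu x y deltaA deltaC vb betaA betaC lamH lamL piv rb
        (X s) (uP s) (uT s) i) * Real.exp (-(18 * K * s))
      + g s * (Real.exp (-(18 * K * s)) * -(18 * K))) s := by
    intro s hsI
    have e1 : HasDerivAt (fun r : ℝ => -(18 * K * r)) (-(18 * K)) s := by
      simpa using ((hasDerivAt_id s).const_mul (18 * K)).fun_neg
    exact (hg' s hsI).mul e1.exp
  have hwanti : AntitoneOn w I := by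
    apply antitoneOn_of_deriv_nonpos (convex_Icc t₀ T)
    · exact fun s hs => (hw' s hs).continuousAt.continuousWithinAt
    · intro s hs
      rw [interior_Icc] at hs
      exact ((hw' s (Set.Ioo_subset_Icc_self hs)).differentiableAt.differentiableWithinAt)
    · intro s hs
      rw [interior_Icc] at hs
      have hsI : s ∈ I := Set.Ioo_subset_Icc_self hs
      rw [(hw' s hsI).deriv]
      have hexp := Real.exp_pos (-(18 * K * s))
      linarith only [mul_le_mul_of_nonneg_right (key s hsI) hexp.le]
  intro t htI i
  have hw0 : w t ≤ w t₀ := hwanti ht₀I htI htI.1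
  have hgt₀ : g t₀ = 0 := by
    simp only [hgdef]
    refine Finset.sum_eq_zero fun j _ => ?_
    rw [min_eq_right (hX₀ j)]
    norm_num
  have hwt₀ : w t₀ = 0 := by simp only [hwdef]; rw [hgt₀]; ring
  have hwt : w t = g t * Real.exp (-(18 * K * t)) := by simp only [hwdef]
  have hg0 : 0 ≤ g t := by
    simp only [hgdef]
    exact Finset.sum_nonneg fun j _ => sq_nonneg _
  have hexp := Real.exp_pos (-(18 * K * t))
  have hgle : g t ≤ 0 := by nlinarith only [hw0, hwt₀, hwt, hexp, hg0]
  have hgeq : g t = 0 := le_antisymm hgle hg0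
  have hzero := (Finset.sum_eq_zero_iff_of_nonneg
    (fun j (_ : j ∈ Finset.univ) => sq_nonneg (min (X t j) 0))).1
    (by simpa [hgdef] using hgeq) i (Finset.mem_univ i)
  have hmin : min (X t i) 0 = 0 := by
    exact pow_eq_zero_iff (by norm_num) |>.1 hzero
  exact min_eq_right_iff.1 hmin
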